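/- Let 0 < α < 1. Then (sin(απ)/π) · ∫₀^∞ r^{α−1}/(r^{2α} + 2 r^α cos(απ) + 1) dr = 1; equivalently, W₀(0) = 1. -/

import Mathlib

open MeasureTheory Real Set

lemma arctan_integral (c s θ : ℝ) (hs : 0 < s) (hcs : c ^ 2 + s ^ 2 = 1)
    (hθ1 : -(π/2) < π/2 - θ) (hθ2 : π/2 - θ < π/2)
    (hc : c = Real.cos θ) (hsin : s = Real.sin θ) :
    ∫ u in Ioi (0:ℝ), 1 / (u ^ 2 + 2 * u * c + 1) = θ / s := by
  have key : ∫ u in Ioi (0:ℝ), 1 / (u ^ 2 + 2 * u * c + 1)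
      = (1/s) * (π/2) - (1/s) * Real.arctan ((0 + c)/s) := by
    apply integral_Ioi_of_hasDerivAt_of_nonneg'
      (g := fun u => (1/s) * Real.arctan ((u + c)/s))
    · intro x _
      have h1 : HasDerivAt (fun u : ℝ => (u + c)/s) (1/s) x := by
        simpa using ((hasDerivAt_id x).add_const c).div_const s
      have h2 := (Real.hasDerivAt_arctan ((x + c)/s)).comp x h1
      have h3 := h2.const_mul (1/s)
      refine h3.congr_deriv ?_
      have hs' : s ≠ 0 := hs.ne'
      have hden : x ^ 2 + 2 * x * c + 1 = (x + c) ^ 2 + s ^ 2 := by nlinarith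
      rw [hden]
      have hpos : (0:ℝ) < (x + c) ^ 2 + s ^ 2 := by positivity
      field_simp
      ring
    · intro x _
      have hden : x ^ 2 + 2 * x * c + 1 = (x + c) ^ 2 + s ^ 2 := by nlinarith
      rw [hden]; positivity
    · have h1 : Filter.Tendsto (fun u : ℝ => (u + c)/s) Filter.atTop Filter.atTop := by
        apply Filter.Tendsto.atTop_div_const hs
        exact Filter.tendsto_atTop_add_const_right _ c Filter.tendsto_id
      have h2 := (Real.tendsto_arctan_atTop.mono_right nhdsWithin_le_nhds).comp h1
      exact h2.const_mul (1/s)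
  rw [key]
  have harc : Real.arctan ((0 + c)/s) = π/2 - θ := by
    rw [zero_add, hc, hsin]
    have : Real.cos θ / Real.sin θ = Real.tan (π/2 - θ) := by
      rw [Real.tan_eq_sin_div_cos, Real.sin_pi_div_two_sub, Real.cos_pi_div_two_sub]
    rw [this, Real.arctan_tan hθ1 hθ2]
  rw [harc]
  field_simp
  ring

/-- `W₀(0) = 1`: for `0 < α < 1`,
`(sin(απ)/π) ∫₀^∞ r^(α-1)/(r^(2α) + 2 r^α cos(απ) + 1) dr = 1`. -/
theorem W0_at_zero (α : ℝ) (hα0 : 0 < α) (hα1 : α < 1) :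
    (Real.sin (α * Real.pi) / Real.pi) *
        ∫ r in Set.Ioi (0 : ℝ),
          r ^ (α - 1) / (r ^ (2 * α) + 2 * r ^ α * Real.cos (α * Real.pi) + 1)
      = 1 := by
  set θ := α * Real.pi with hθ
  have hπ := Real.pi_pos
  have hθ0 : 0 < θ := by positivity
  have hθπ : θ < π := by
    have := mul_lt_of_lt_one_left hπ hα1
    simpa [hθ] using this
  set c := Real.cos θ
  set s := Real.sin θ with hsdef
  have hs : 0 < s := Real.sin_pos_of_pos_of_lt_pi hθ0 hθπ
  have hcs : c ^ 2 + s ^ 2 = 1 := by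
    exact Real.cos_sq_add_sin_sq θ
  -- the inner integral in u
  have hinner : ∫ u in Ioi (0:ℝ), 1 / (u ^ 2 + 2 * u * c + 1) = θ / s :=
    arctan_integral c s θ hs hcs (by linarith) (by linarith) rfl rfl
  -- substitution
  have hsub : (∫ r in Ioi (0:ℝ), (|α| * r ^ (α - 1)) •
      (fun u : ℝ => 1 / (u ^ 2 + 2 * u * c + 1)) (r ^ α)) = θ / s := by
    exact (integral_comp_rpow_Ioi _ hα0.ne').trans hinner
  have habs : |α| = α := abs_of_pos hα0
  -- rewrite original integrand
  have hcongr : ∫ r in Set.Ioi (0 : ℝ),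
      r ^ (α - 1) / (r ^ (2 * α) + 2 * r ^ α * c + 1)
      = ∫ r in Ioi (0:ℝ), (1/α) * ((|α| * r ^ (α - 1)) •
        (fun u : ℝ => 1 / (u ^ 2 + 2 * u * c + 1)) (r ^ α)) := by
    apply setIntegral_congr_fun measurableSet_Ioi
    intro r hr
    have hr0 : (0:ℝ) < r := hr
    have h2 : r ^ (2 * α) = (r ^ α) ^ 2 := by
      rw [mul_comm 2 α, ← Real.rpow_natCast (r ^ α) 2, ← Real.rpow_mul hr0.le]
      norm_num
    simp only [smul_eq_mul, habs, h2]
    field_simp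
  rw [hcongr, integral_const_mul, hsub]
  rw [hθ]
  have hsne : s ≠ 0 := hs.ne'
  field_simp [hsdef, hθ]
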